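/- The ε-smooth quantum Rényi entropy of order α ∈ [0,1) of a density matrix ρ, defined as the infimum of S_α(σ) over non-normalized density matrices σ with 0 ≤ σ ≤ ρ and tr(σ) ≥ 1 − ε, equals the ε-smooth classical Rényi entropy of order α of the eigenvalue distribution λ of ρ, defined as the infimum of H_α(μ) over μ with 0 ≤ μ_i ≤ λ_i for all i and ∑_i μ_i ≥ 1 − ε. -/

import Mathlib

open Matrix Real Finset
open scoped ComplexOrder

namespace SmoothRenyiAux

open Polynomial

variable {m : ℕ}

lemma charpoly_unitary_conj {U : Matrix (Fin m) (Fin m) ℂ}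
    (hU : U * star U = 1) (D : Matrix (Fin m) (Fin m) ℂ) :
    (U * D * star U).charpoly = D.charpoly := by
  have key : charmatrix (U * D * star U) =
      U.map (C : ℂ →+* ℂ[X]) * charmatrix D * (star U).map (C : ℂ →+* ℂ[X]) := by
    rw [charmatrix, charmatrix]
    rw [mul_sub, sub_mul]
    congr 1
    · have h1 : U.map (C : ℂ →+* ℂ[X]) * Matrix.scalar (Fin m) (X : ℂ[X]) =
          Matrix.scalar (Fin m) (X : ℂ[X]) * U.map (C : ℂ →+* ℂ[X]) :=
        (Matrix.scalar_commute (X : ℂ[X]) (fun r => mul_comm _ _) _).symm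
      rw [h1, mul_assoc, ← Matrix.map_mul, hU, Matrix.map_one _ (map_zero C) (map_one C),
        mul_one]
    · simp only [RingHom.mapMatrix_apply, ← Matrix.map_mul]
  rw [Matrix.charpoly, Matrix.charpoly, key, det_mul, det_mul, mul_comm, ← mul_assoc,
    ← det_mul, ← Matrix.map_mul, mul_eq_one_comm.mp hU,
    Matrix.map_one _ (map_zero C) (map_one C), det_one, one_mul]

lemma charpoly_diagonal' (d : Fin m → ℂ) :
    (Matrix.diagonal d).charpoly = ∏ i, (X - C (d i)) := by
  rw [Matrix.charpoly_of_upperTriangular _ (Matrix.blockTriangular_diagonal d)]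
  simp

lemma eig_multiset {σ : Matrix (Fin m) (Fin m) ℂ} (hσ : σ.IsHermitian)
    {U : Matrix (Fin m) (Fin m) ℂ} (hU : U * star U = 1) (d : Fin m → ℝ)
    (h : σ = U * Matrix.diagonal (fun i => (d i : ℂ)) * star U) :
    Multiset.map d Finset.univ.val = Multiset.map hσ.eigenvalues Finset.univ.val := by
  have h1 : σ.charpoly = ∏ i, (X - C ((d i : ℂ))) := by
    rw [h, charpoly_unitary_conj hU, charpoly_diagonal']
  have h2 : σ.charpoly = ∏ i, (X - C ((hσ.eigenvalues i : ℂ))) := by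
    have := congrArg Matrix.charpoly hσ.spectral_theorem
    rwa [Unitary.conjStarAlgAut_apply, charpoly_unitary_conj
      (Matrix.mem_unitaryGroup_iff.mp hσ.eigenvectorUnitary.2), charpoly_diagonal'] at this
  have key : ∀ f : Fin m → ℝ,
      (∏ i, (X - C ((f i : ℂ)))) =
        ((Multiset.map (fun i => ((f i : ℝ) : ℂ)) Finset.univ.val).map
          (fun a => X - C a)).prod := by
    intro f
    rw [Multiset.map_map]
    rfl
  have hroots : Multiset.map (fun i => ((d i : ℝ) : ℂ)) Finset.univ.val =
      Multiset.map (fun i => ((hσ.eigenvalues i : ℝ) : ℂ)) Finset.univ.val := by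
    have := h1.symm.trans h2
    rw [key d, key hσ.eigenvalues] at this
    have := congrArg Polynomial.roots this
    rwa [Polynomial.roots_multiset_prod_X_sub_C, Polynomial.roots_multiset_prod_X_sub_C] at this
  have : Multiset.map (fun x : ℝ => (x : ℂ)) (Multiset.map d Finset.univ.val) =
      Multiset.map (fun x : ℝ => (x : ℂ)) (Multiset.map hσ.eigenvalues Finset.univ.val) := by
    rw [Multiset.map_map, Multiset.map_map]
    exact hroots
  exact Multiset.map_injective Complex.ofReal_injective this

lemma sum_comp_of_multiset_eq {d e : Fin m → ℝ}
    (h : Multiset.map d Finset.univ.val = Multiset.map e Finset.univ.val) (f : ℝ → ℝ) :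
    ∑ i, f (d i) = ∑ i, f (e i) := by
  have := congrArg (fun s => (s.map f).sum) h
  simpa [Multiset.map_map, Finset.sum, Function.comp_def] using this

lemma card_filter_of_multiset_eq {d e : Fin m → ℝ}
    (h : Multiset.map d Finset.univ.val = Multiset.map e Finset.univ.val) :
    (Finset.univ.filter fun i => 0 < d i).card = (Finset.univ.filter fun i => 0 < e i).card := by
  have h2 := congrArg (fun s => Multiset.countP (fun x : ℝ => 0 < x) s) h
  simp only [Multiset.countP_map] at h2
  have hfc : ∀ f : Fin m → ℝ, (Finset.univ.filter fun i => 0 < f i).card =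
      Multiset.card (Multiset.filter (fun i => 0 < f i) Finset.univ.val) := fun f => rfl
  rw [hfc, hfc]
  simpa using h2

lemma perm_multiset (f : Fin m → ℝ) (p : Equiv.Perm (Fin m)) :
    Multiset.map (fun i => f (p i)) Finset.univ.val = Multiset.map f Finset.univ.val := by
  rw [show (fun i => f (p i)) = f ∘ ⇑p from rfl, ← Multiset.map_map]
  congr 1
  have := congrArg Finset.val (Finset.map_univ_equiv p)
  simpa [Finset.map_val] using this

lemma trace_eq_sum_eig {σ : Matrix (Fin m) (Fin m) ℂ} (hσ : σ.IsHermitian) :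
    σ.trace = ((∑ i, hσ.eigenvalues i : ℝ) : ℂ) := by
  have h := congrArg Matrix.trace hσ.spectral_theorem
  rw [Unitary.conjStarAlgAut_apply, Matrix.trace_mul_cycle,
    mul_eq_one_comm.mp (Matrix.mem_unitaryGroup_iff.mp hσ.eigenvectorUnitary.2), one_mul,
    Matrix.trace_diagonal] at h
  rw [h]
  push_cast
  rfl

lemma rank_eq_card_pos_eig {σ : Matrix (Fin m) (Fin m) ℂ} (hσ : σ.PosSemidef) :
    σ.rank = (Finset.univ.filter fun i => 0 < hσ.1.eigenvalues i).card := by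
  rw [hσ.1.rank_eq_card_non_zero_eigs, Fintype.card_subtype]
  congr 1
  ext i
  simp only [Finset.mem_filter, Finset.mem_univ, true_and]
  constructor
  · intro h; exact lt_of_le_of_ne (hσ.eigenvalues_nonneg i) (Ne.symm h)
  · intro h; exact ne_of_gt h

lemma star_dot_self (v : Fin m → ℂ) :
    star v ⬝ᵥ v = ((∑ j, Complex.normSq (v j) : ℝ) : ℂ) := by
  push_cast
  refine Finset.sum_congr rfl fun j _ => ?_
  rw [Pi.star_apply, Complex.star_def, mul_comm, Complex.mul_conj]

lemma star_mulVec_dot (U : Matrix (Fin m) (Fin m) ℂ) (hU : star U * U = 1)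
    (c v : Fin m → ℂ) : star (U *ᵥ c) ⬝ᵥ (U *ᵥ v) = star c ⬝ᵥ v := by
  rw [Matrix.star_mulVec, dotProduct_mulVec, Matrix.vecMul_vecMul,
    ← Matrix.star_eq_conjTranspose, hU, Matrix.vecMul_one]

lemma quad_form_eq {A U : Matrix (Fin m) (Fin m) ℂ} (hU : star U * U = 1)
    {a : Fin m → ℝ} (hAU : A * U = U * Matrix.diagonal (fun j => (a j : ℂ)))
    (c : Fin m → ℂ) :
    star (U *ᵥ c) ⬝ᵥ (A *ᵥ (U *ᵥ c)) = ((∑ j, a j * Complex.normSq (c j) : ℝ) : ℂ) := by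
  have h1 : A *ᵥ (U *ᵥ c) = U *ᵥ (fun j => (a j : ℂ) * c j) := by
    rw [Matrix.mulVec_mulVec, hAU, ← Matrix.mulVec_mulVec]
    congr 1
    funext j
    simp [Matrix.mulVec, dotProduct, Matrix.diagonal, ite_mul, zero_mul,
      Finset.sum_ite_eq, mul_assoc]
  rw [h1, star_mulVec_dot U hU]
  push_cast
  refine Finset.sum_congr rfl fun j _ => ?_
  rw [Pi.star_apply, Complex.star_def]
  have : (Complex.normSq (c j) : ℂ) = (starRingEnd ℂ) (c j) * c j := by
    rw [mul_comm, Complex.mul_conj]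
  rw [this]; ring

lemma weyl {A B : Matrix (Fin m) (Fin m) ℂ} (hAB : (B - A).PosSemidef)
    {U W : Matrix (Fin m) (Fin m) ℂ} (hU : star U * U = 1) (hW : star W * W = 1)
    {a b : Fin m → ℝ}
    (hAU : A * U = U * Matrix.diagonal (fun j => (a j : ℂ)))
    (hBW : B * W = W * Matrix.diagonal (fun j => (b j : ℂ)))
    (ha : Antitone a) (hb : Antitone b) (k : Fin m) : a k ≤ b k := by
  classical
  set M : Matrix (Fin m) (Fin m) ℂ :=
    Matrix.of (fun j i => if j < k then star (W i j) else if j = k then 0 else star (U i j))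
    with hM
  have hdet : M.det = 0 :=
    Matrix.det_eq_zero_of_row_eq_zero k (fun i => by simp [hM])
  obtain ⟨x, hx0, hx⟩ := (Matrix.exists_mulVec_eq_zero_iff).mpr hdet
  set c := star U *ᵥ x with hc
  set d := star W *ᵥ x with hd
  have hUU : U * star U = 1 := mul_eq_one_comm.mp hU
  have hWW : W * star W = 1 := mul_eq_one_comm.mp hW
  have hxc : U *ᵥ c = x := by rw [hc, Matrix.mulVec_mulVec, hUU, Matrix.one_mulVec]
  have hxd : W *ᵥ d = x := by rw [hd, Matrix.mulVec_mulVec, hWW, Matrix.one_mulVec]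
  have hc0 : ∀ j, k < j → c j = 0 := by
    intro j hj
    have h1 : (M *ᵥ x) j = 0 := by rw [hx]; rfl
    rw [← h1, hc]
    simp [hM, Matrix.mulVec, dotProduct, Matrix.star_apply,
      not_lt.mpr hj.le, hj.ne']
  have hd0 : ∀ j, j < k → d j = 0 := by
    intro j hj
    have h1 : (M *ᵥ x) j = 0 := by rw [hx]; rfl
    rw [← h1, hd]
    simp [hM, Matrix.mulVec, dotProduct, Matrix.star_apply, hj]
  have hNc : star c ⬝ᵥ c = star x ⬝ᵥ x := by rw [← hxc, star_mulVec_dot U hU]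
  have hNd : star d ⬝ᵥ d = star x ⬝ᵥ x := by rw [← hxd, star_mulVec_dot W hW]
  have hNceq : ∑ j, Complex.normSq (c j) = ∑ i, Complex.normSq (x i) :=
    Complex.ofReal_injective (by rw [← star_dot_self, ← star_dot_self, hNc])
  have hNdeq : ∑ j, Complex.normSq (d j) = ∑ i, Complex.normSq (x i) :=
    Complex.ofReal_injective (by rw [← star_dot_self, ← star_dot_self, hNd])
  set N := ∑ i, Complex.normSq (x i) with hN
  have hNpos : 0 < N := by
    obtain ⟨i, hi⟩ := Function.ne_iff.mp hx0
    exact Finset.sum_pos' (fun i _ => Complex.normSq_nonneg _)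
      ⟨i, Finset.mem_univ i, Complex.normSq_pos.mpr hi⟩
  set SA := ∑ j, a j * Complex.normSq (c j) with hSA
  set SB := ∑ j, b j * Complex.normSq (d j) with hSB
  have hqA : star x ⬝ᵥ (A *ᵥ x) = (SA : ℂ) := by rw [← hxc]; exact quad_form_eq hU hAU c
  have hqB : star x ⬝ᵥ (B *ᵥ x) = (SB : ℂ) := by rw [← hxd]; exact quad_form_eq hW hBW d
  have hle : SA ≤ SB := by
    have h2 := hAB.dotProduct_mulVec_nonneg x
    rw [Matrix.sub_mulVec, dotProduct_sub, hqA, hqB, ← Complex.ofReal_sub] at h2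
    have := Complex.zero_le_real.mp h2
    linarith
  have hlow : a k * N ≤ SA := by
    rw [hSA, ← hNceq, Finset.mul_sum]
    refine Finset.sum_le_sum fun j _ => ?_
    rcases le_or_gt j k with hjk | hjk
    · exact mul_le_mul_of_nonneg_right (ha hjk) (Complex.normSq_nonneg _)
    · rw [hc0 j hjk]; simp
  have hhigh : SB ≤ b k * N := by
    rw [hSB, ← hNdeq, Finset.mul_sum]
    refine Finset.sum_le_sum fun j _ => ?_
    rcases lt_or_ge j k with hjk | hjk
    · rw [hd0 j hjk]; simp
    · exact mul_le_mul_of_nonneg_right (hb hjk) (Complex.normSq_nonneg _)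
  exact le_of_mul_le_mul_right (hlow.trans (hle.trans hhigh)) hNpos

lemma unitary_perm_facts {A : Matrix (Fin m) (Fin m) ℂ} (hA : A.IsHermitian)
    (p : Equiv.Perm (Fin m)) :
    star ((hA.eigenvectorUnitary : Matrix (Fin m) (Fin m) ℂ).submatrix id ⇑p) *
      ((hA.eigenvectorUnitary : Matrix (Fin m) (Fin m) ℂ).submatrix id ⇑p) = 1 ∧
    A * ((hA.eigenvectorUnitary : Matrix (Fin m) (Fin m) ℂ).submatrix id ⇑p) =
      ((hA.eigenvectorUnitary : Matrix (Fin m) (Fin m) ℂ).submatrix id ⇑p) *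
        Matrix.diagonal (fun j => ((hA.eigenvalues (p j) : ℝ) : ℂ)) := by
  set X := (hA.eigenvectorUnitary : Matrix (Fin m) (Fin m) ℂ) with hX
  have hsXX : star X * X = 1 :=
    mul_eq_one_comm.mp (Matrix.mem_unitaryGroup_iff.mp hA.eigenvectorUnitary.2)
  constructor
  · ext i j
    have : (star (X.submatrix id ⇑p) * X.submatrix id ⇑p) i j = (star X * X) (p i) (p j) := by
      simp [Matrix.mul_apply, Matrix.star_apply, Matrix.submatrix_apply]
    rw [this, hsXX]
    simp [Matrix.one_apply, Equiv.apply_eq_iff_eq]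
  · have hst : A = X * Matrix.diagonal (fun i => ((hA.eigenvalues i : ℝ) : ℂ)) * star X :=
      hA.spectral_theorem
    have hAX : A * X = X * Matrix.diagonal (fun i => ((hA.eigenvalues i : ℝ) : ℂ)) := by
      calc A * X = X * Matrix.diagonal (fun i => ((hA.eigenvalues i : ℝ) : ℂ)) * star X * X := by
            rw [← hst]
        _ = X * Matrix.diagonal (fun i => ((hA.eigenvalues i : ℝ) : ℂ)) * (star X * X) := by
            rw [mul_assoc]
        _ = _ := by rw [hsXX, mul_one]
    ext i j
    have h1 : (A * X.submatrix id ⇑p) i j = (A * X) i (p j) := by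
      simp [Matrix.mul_apply, Matrix.submatrix_apply]
    rw [h1, hAX]
    simp [Matrix.mul_diagonal, Matrix.submatrix_apply]

end SmoothRenyiAux

open SmoothRenyiAux

/-- The ε-smooth quantum Rényi entropy of order `α ∈ [0,1)` of a density matrix
equals the ε-smooth classical Rényi entropy of its eigenvalue distribution. -/
theorem smooth_quantum_renyi_eq_smooth_classical {m : ℕ}
    {ρ : Matrix (Fin m) (Fin m) ℂ} (hρps : ρ.PosSemidef) (htr : ρ.trace = 1)
    (ε : ℝ) (hε0 : 0 ≤ ε) (hε1 : ε < 1)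
    (α : ℝ) (hα0 : 0 ≤ α) (hα1 : α < 1)
    (lam : Fin m → ℝ) (hlam : Antitone lam)
    (hlamEig : ∃ e : Equiv.Perm (Fin m), lam = hρps.1.eigenvalues ∘ e) :
    sInf {x : ℝ | ∃ (σ : Matrix (Fin m) (Fin m) ℂ) (hσps : σ.PosSemidef),
        (ρ - σ).PosSemidef ∧ 1 - ε ≤ σ.trace.re ∧
        x = if α = 0 then Real.log (σ.rank)
            else (1 / (1 - α)) * Real.log (∑ i, hσps.1.eigenvalues i ^ α)} =
    sInf {x : ℝ | ∃ mu : Fin m → ℝ, (∀ i, 0 ≤ mu i ∧ mu i ≤ lam i) ∧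
        1 - ε ≤ ∑ i, mu i ∧
        x = if α = 0 then Real.log ((Finset.univ.filter fun i => 0 < mu i).card)
            else (1 / (1 - α)) * Real.log (∑ i, mu i ^ α)} := by
  obtain ⟨e, he⟩ := hlamEig
  have hset : {x : ℝ | ∃ (σ : Matrix (Fin m) (Fin m) ℂ) (hσps : σ.PosSemidef),
        (ρ - σ).PosSemidef ∧ 1 - ε ≤ σ.trace.re ∧
        x = if α = 0 then Real.log (σ.rank)
            else (1 / (1 - α)) * Real.log (∑ i, hσps.1.eigenvalues i ^ α)} =
      {x : ℝ | ∃ mu : Fin m → ℝ, (∀ i, 0 ≤ mu i ∧ mu i ≤ lam i) ∧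
        1 - ε ≤ ∑ i, mu i ∧
        x = if α = 0 then Real.log ((Finset.univ.filter fun i => 0 < mu i).card)
            else (1 / (1 - α)) * Real.log (∑ i, mu i ^ α)} := by
    ext x
    simp only [Set.mem_setOf_eq]
    constructor
    · rintro ⟨σ, hσps, hsub, htrσ, hxval⟩
      set eigs := hσps.1.eigenvalues with heigs
      obtain ⟨p, hp⟩ : ∃ p : Equiv.Perm (Fin m), Antitone (fun i => eigs (p i)) := by
        refine ⟨Tuple.sort (fun i => -eigs i), fun i j hij => ?_⟩
        have := Tuple.monotone_sort (fun i => -eigs i) hij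
        simpa using this
      refine ⟨fun i => eigs (p i), fun k => ⟨hσps.eigenvalues_nonneg _, ?_⟩, ?_, ?_⟩
      · -- Weyl
        have hσfacts := unitary_perm_facts hσps.1 p
        have hρfacts := unitary_perm_facts hρps.1 e
        have hb : Antitone (fun j => hρps.1.eigenvalues (e j)) := by
          have : (fun j => hρps.1.eigenvalues (e j)) = lam := by
            funext j; rw [he]; rfl
          rw [this]; exact hlam
        have := weyl hsub hσfacts.1 hρfacts.1 hσfacts.2 hρfacts.2 hp hb k
        rw [he]
        exact this
      · have hsum : ∑ i, eigs (p i) = ∑ i, eigs i := Equiv.sum_comp p eigs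
        rw [hsum]
        have htr2 : σ.trace.re = ∑ i, eigs i := by
          rw [trace_eq_sum_eig hσps.1, Complex.ofReal_re]
        rw [← htr2]
        exact htrσ
      · have hms : Multiset.map (fun i => eigs (p i)) Finset.univ.val =
            Multiset.map eigs Finset.univ.val := perm_multiset eigs p
        by_cases hα : α = 0
        · simp only [hα, if_true, reduceIte] at hxval ⊢
          rw [hxval, rank_eq_card_pos_eig hσps, card_filter_of_multiset_eq hms]
        · simp only [hα, if_false, reduceIte] at hxval ⊢
          rw [hxval, sum_comp_of_multiset_eq hms (fun t => t ^ α)]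
    · rintro ⟨mu, hmu, hsum, hxval⟩
      set V := (hρps.1.eigenvectorUnitary : Matrix (Fin m) (Fin m) ℂ) with hV
      have hVsV : star V * V = 1 :=
        mul_eq_one_comm.mp (Matrix.mem_unitaryGroup_iff.mp hρps.1.eigenvectorUnitary.2)
      have hVVs : V * star V = 1 := Matrix.mem_unitaryGroup_iff.mp hρps.1.eigenvectorUnitary.2
      set dvec : Fin m → ℝ := fun i => mu (e.symm i) with hdvec
      set σ := V * Matrix.diagonal (fun i => ((dvec i : ℝ) : ℂ)) * star V with hσdef
      have hσps : σ.PosSemidef := by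
        rw [hσdef, Matrix.star_eq_conjTranspose]
        exact (Matrix.posSemidef_diagonal_iff.mpr fun i =>
          Complex.zero_le_real.mpr (hmu (e.symm i)).1).mul_mul_conjTranspose_same V
      have hlameig : ∀ i, hρps.1.eigenvalues i = lam (e.symm i) := by
        intro i
        rw [he]
        simp
      have hsub : (ρ - σ).PosSemidef := by
        have hρeq : ρ = V * Matrix.diagonal (fun i => ((hρps.1.eigenvalues i : ℝ) : ℂ)) * star V :=
          hρps.1.spectral_theorem
        have hdiag : Matrix.diagonal (fun i => ((hρps.1.eigenvalues i : ℝ) : ℂ)) -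
            Matrix.diagonal (fun i => ((dvec i : ℝ) : ℂ)) =
            Matrix.diagonal (fun i => ((lam (e.symm i) - mu (e.symm i) : ℝ) : ℂ)) := by
          ext i j
          rcases eq_or_ne i j with rfl | hij
          · simp only [Matrix.sub_apply, Matrix.diagonal_apply_eq]
            rw [hlameig i]
            push_cast
            ring
          · simp [Matrix.diagonal_apply_ne _ hij]
        have : ρ - σ = V * Matrix.diagonal
            (fun i => ((lam (e.symm i) - mu (e.symm i) : ℝ) : ℂ)) * star V := by
          rw [hρeq, hσdef, ← Matrix.sub_mul, ← Matrix.mul_sub, hdiag]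
        rw [this, Matrix.star_eq_conjTranspose]
        exact (Matrix.posSemidef_diagonal_iff.mpr fun i =>
          Complex.zero_le_real.mpr
            (sub_nonneg.mpr (hmu (e.symm i)).2)).mul_mul_conjTranspose_same V
      have hms0 : Multiset.map dvec Finset.univ.val = Multiset.map mu Finset.univ.val :=
        perm_multiset mu e.symm
      have hms : Multiset.map mu Finset.univ.val =
          Multiset.map hσps.1.eigenvalues Finset.univ.val := by
        rw [← hms0]
        exact eig_multiset hσps.1 hVVs dvec hσdef
      refine ⟨σ, hσps, hsub, ?_, ?_⟩
      · have htrσ : σ.trace = ((∑ i, mu i : ℝ) : ℂ) := by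
          rw [trace_eq_sum_eig hσps.1]
          congr 1
          rw [← sum_comp_of_multiset_eq hms (fun t => t)]
        rw [htrσ, Complex.ofReal_re]
        exact hsum
      · by_cases hα : α = 0
        · simp only [hα, if_true, reduceIte] at hxval ⊢
          rw [hxval, rank_eq_card_pos_eig hσps, card_filter_of_multiset_eq hms]
        · simp only [hα, if_false, reduceIte] at hxval ⊢
          rw [hxval, sum_comp_of_multiset_eq hms (fun t => t ^ α)]
  rw [hset]
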